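/- Let n ≥ 2 and a_0 ≥ a_1 ≥ ⋯ ≥ a_n ≥ 1 be integers with a_0 ≥ a_1 + ⋯ + a_n. Then at least one of the two multinomial coefficients (a_0+⋯+a_n)!/(a_0!⋯a_n!) and (a_0+1)!/((a_0+1−(a_1+⋯+a_n))! · a_1! ⋯ a_n!) is even. -/

import Mathlib

private lemma land_zero_iff (a b : ℕ) :
    a &&& b = 0 ↔ ∀ i, a.testBit i = false ∨ b.testBit i = false := by
  constructor
  · intro h i
    have h2 := Nat.testBit_and a b i
    rw [h, Nat.zero_testBit] at h2
    cases ha : a.testBit i <;> cases hb : b.testBit i <;> simp_all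
  · intro h
    apply Nat.eq_of_testBit_eq
    intro i
    rw [Nat.testBit_and, Nat.zero_testBit]
    rcases h i with h3 | h3 <;> simp [h3]

private lemma land_div2 {a b : ℕ} :
    a &&& b = 0 ↔ (¬(a % 2 = 1 ∧ b % 2 = 1)) ∧ (a / 2) &&& (b / 2) = 0 := by
  rw [land_zero_iff, land_zero_iff]
  constructor
  · intro h
    refine ⟨?_, fun i => ?_⟩
    · intro ⟨ha, hb⟩
      rcases h 0 with h0 | h0 <;> simp [Nat.testBit_zero, ha, hb] at h0
    · have := h (i + 1)
      simpa [Nat.testBit_div_two] using this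
  · intro ⟨h0, h⟩ i
    cases i with
    | zero => simp only [Nat.testBit_zero, decide_eq_false_iff_not]; tauto
    | succ i => simpa [Nat.testBit_div_two] using h i

private lemma choose_odd_iff :
    ∀ m a b : ℕ, a + b ≤ m → ((a + b).choose a % 2 = 1 ↔ a &&& b = 0) := by
  intro m
  induction m with
  | zero =>
    intro a b h
    have ha : a = 0 := by omega
    have hb : b = 0 := by omega
    simp [ha, hb]
  | succ m ih =>
    intro a b h
    haveI : Fact (Nat.Prime 2) := ⟨Nat.prime_two⟩
    have lucas : (a + b).choose a % 2 =
        (((a + b) % 2).choose (a % 2) * ((a + b) / 2).choose (a / 2)) % 2 :=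
      Choose.choose_modEq_choose_mod_mul_choose_div_nat (p := 2)
    rw [land_div2, lucas]
    by_cases hpar : a % 2 = 1 ∧ b % 2 = 1
    · have h0 : (a + b) % 2 = 0 := by omega
      have hc : (0 : ℕ).choose 1 = 0 := rfl
      rw [h0, hpar.1, hc]
      simp only [Nat.zero_mul, Nat.zero_mod]
      constructor
      · omega
      · intro hcc; exact (hcc.1 ⟨by trivial, hpar.2⟩).elim
    · have hd : (a + b) / 2 = a / 2 + b / 2 := by omega
      have h1 : ((a + b) % 2).choose (a % 2) = 1 := by
        rcases Nat.mod_two_eq_zero_or_one a with ha | ha <;>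
          rcases Nat.mod_two_eq_zero_or_one b with hb | hb
        · have hs : (a + b) % 2 = 0 := by omega
          rw [hs, ha]; rfl
        · have hs : (a + b) % 2 = 1 := by omega
          rw [hs, ha]; rfl
        · have hs : (a + b) % 2 = 1 := by omega
          rw [hs, ha]; rfl
        · exact absurd ⟨ha, hb⟩ hpar
      rw [h1, one_mul, hd, ih (a / 2) (b / 2) (by omega)]
      tauto

private lemma testBit_add_of_land_zero :
    ∀ (i a b : ℕ), a &&& b = 0 → (a + b).testBit i = (a.testBit i || b.testBit i) := by
  intro i
  induction i with
  | zero =>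
    intro a b h
    rw [land_div2] at h
    simp only [Nat.testBit_zero]
    rcases Nat.mod_two_eq_zero_or_one a with ha | ha <;>
      rcases Nat.mod_two_eq_zero_or_one b with hb | hb
    · have hs : (a + b) % 2 = 0 := by omega
      simp [hs, ha, hb]
    · have hs : (a + b) % 2 = 1 := by omega
      simp [hs, ha, hb]
    · have hs : (a + b) % 2 = 1 := by omega
      simp [hs, ha, hb]
    · exact absurd ⟨ha, hb⟩ h.1
  | succ i ih =>
    intro a b h
    rw [land_div2] at h
    have hd : (a + b) / 2 = a / 2 + b / 2 := by
      have := h.1; omega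
    rw [Nat.testBit_add_one, Nat.testBit_add_one, Nat.testBit_add_one, hd, ih _ _ h.2]

private lemma no_two_new_bits {m i j : ℕ} (hij : i < j)
    (hmj : m.testBit j = false) (hj : (m + 1).testBit j = true)
    (hi : (m + 1).testBit i = true) : False := by
  rw [Nat.testBit_eq_decide_div_mod_eq] at hmj hj hi
  simp only [decide_eq_true_eq, decide_eq_false_iff_not] at hmj hj hi
  have hdvd : 2 ^ j ∣ m + 1 := by
    by_contra hnd
    have hs := Nat.succ_div (a := m) (b := 2 ^ j)
    rw [if_neg hnd] at hs
    omega
  obtain ⟨q, hq⟩ := hdvd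
  have h2 : (m + 1) / 2 ^ i = 2 ^ (j - i) * q := by
    rw [hq, show (2 : ℕ) ^ j = 2 ^ i * 2 ^ (j - i) by
      rw [← pow_add]; congr 1; omega, mul_assoc,
      Nat.mul_div_cancel_left _ (Nat.pow_pos (n := i) (by norm_num))]
  obtain ⟨r, hr⟩ : 2 ∣ 2 ^ (j - i) := dvd_pow_self 2 (by omega)
  rw [h2, hr, mul_assoc] at hi
  omega
theorem one_multinomial_even (n : ℕ) (hn : 2 ≤ n) (a : Fin (n + 1) → ℕ)
    (hmono : ∀ i j : Fin (n + 1), i ≤ j → a j ≤ a i) (hpos : ∀ i, 1 ≤ a i)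
    (hbig : (∑ i ∈ Finset.univ.erase (0 : Fin (n + 1)), a i) ≤ a 0) :
    Even (Nat.multinomial Finset.univ a) ∨
      Even (Nat.multinomial Finset.univ
        (Function.update a 0 (a 0 + 1 - ∑ i ∈ Finset.univ.erase (0 : Fin (n + 1)), a i))) := by
  by_contra hcon
  rw [not_or, Nat.not_even_iff_odd, Nat.not_even_iff_odd] at hcon
  obtain ⟨h1, h2⟩ := hcon
  set t : Finset (Fin (n + 1)) := Finset.univ.erase 0 with ht
  set S : ℕ := ∑ i ∈ t, a i with hS
  set b : ℕ := a 0 + 1 - S with hb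
  have h0t : (0 : Fin (n + 1)) ∉ t := Finset.notMem_erase _ _
  have huniv : insert (0 : Fin (n + 1)) t = Finset.univ :=
    Finset.insert_erase (Finset.mem_univ 0)
  -- decompose the first multinomial
  have hM1 : Nat.multinomial Finset.univ a = (a 0 + S).choose (a 0) * Nat.multinomial t a := by
    rw [← huniv, Nat.multinomial_insert h0t]
  rw [hM1, Nat.odd_mul] at h1
  have hA : a 0 &&& S = 0 := (choose_odd_iff (a 0 + S) (a 0) S le_rfl).mp (Nat.odd_iff.mp h1.1)
  -- decompose the second multinomial
  set g : Fin (n + 1) → ℕ := Function.update a 0 b with hg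
  have hg0 : g 0 = b := Function.update_self 0 b a
  have hgt : ∀ i ∈ t, g i = a i := fun i hi =>
    Function.update_of_ne (Finset.ne_of_mem_erase hi) _ _
  have hM2 : Nat.multinomial Finset.univ g = (b + S).choose b * Nat.multinomial t g := by
    rw [← huniv, Nat.multinomial_insert h0t, hg0, Finset.sum_congr rfl hgt]
  rw [hM2, Nat.odd_mul] at h2
  have hB : b &&& S = 0 := (choose_odd_iff (b + S) b S le_rfl).mp (Nat.odd_iff.mp h2.1)
  have hbS : b + S = a 0 + 1 := by omega
  -- t has two distinct elements x, y
  have hcard : 1 < t.card := by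
    rw [ht, Finset.card_erase_of_mem (Finset.mem_univ 0), Finset.card_univ, Fintype.card_fin]
    omega
  obtain ⟨x, hx, y, hy, hxy⟩ := Finset.one_lt_card.mp hcard
  set S₁ : ℕ := ∑ i ∈ t.erase x, a i with hS₁
  have hsum : a x + S₁ = S := Finset.add_sum_erase t a hx
  have hMt : Nat.multinomial t a = (a x + S₁).choose (a x) * Nat.multinomial (t.erase x) a := by
    rw [← Finset.insert_erase hx, Nat.multinomial_insert (Finset.notMem_erase x t)]
    rw [Finset.erase_insert (Finset.notMem_erase x t)]
  have h3 := h1.2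
  rw [hMt, Nat.odd_mul] at h3
  have hX : a x &&& S₁ = 0 :=
    (choose_odd_iff (a x + S₁) (a x) S₁ le_rfl).mp (Nat.odd_iff.mp h3.1)
  have hyx : y ∈ t.erase x := Finset.mem_erase.mpr ⟨fun h => hxy (h ▸ rfl), hy⟩
  have hS₁pos : 1 ≤ S₁ :=
    le_trans (hpos y) (Finset.single_le_sum (fun i _ => Nat.zero_le (a i)) hyx)
  -- get two distinct bits of S
  obtain ⟨i, hi, -⟩ := Nat.exists_most_significant_bit (show a x ≠ 0 by have := hpos x; omega)
  obtain ⟨j, hj, -⟩ := Nat.exists_most_significant_bit (show S₁ ≠ 0 by omega)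
  have hij : i ≠ j := by
    intro h
    rcases (land_zero_iff _ _).mp hX i with hc | hc
    · rw [hi] at hc; exact Bool.true_eq_false ▸ (by simp at hc)
    · rw [h, hj] at hc; simp at hc
  have hSi : S.testBit i = true := by
    rw [← hsum, testBit_add_of_land_zero i _ _ hX, hi, Bool.true_or]
  have hSj : S.testBit j = true := by
    rw [← hsum, testBit_add_of_land_zero j _ _ hX, hj, Bool.or_true]
  have ha0i : (a 0).testBit i = false := by
    rcases (land_zero_iff _ _).mp hA i with hc | hc
    · exact hc
    · rw [hSi] at hc; simp at hc
  have ha0j : (a 0).testBit j = false := by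
    rcases (land_zero_iff _ _).mp hA j with hc | hc
    · exact hc
    · rw [hSj] at hc; simp at hc
  have ha1i : (a 0 + 1).testBit i = true := by
    rw [← hbS, testBit_add_of_land_zero i _ _ hB, hSi, Bool.or_true]
  have ha1j : (a 0 + 1).testBit j = true := by
    rw [← hbS, testBit_add_of_land_zero j _ _ hB, hSj, Bool.or_true]
  rcases lt_or_gt_of_ne hij with h | h
  · exact no_two_new_bits h ha0j ha1j ha1i
  · exact no_two_new_bits h ha0i ha1i ha1j
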